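/- Let x and y be words in letters 1,…,n such that x[1,2] = y[1,2] and x[2,n] = y[2,n], where x[i,j] denotes the subword of x consisting of letters between i and j inclusive. Then x and y are related by a sequence of commutations of adjacent letters a, b with |a − b| ≥ 2; in particular u_x(λ) = u_y(λ) for all partitions λ. -/

import Mathlib

/-- A partition, represented by its column lengths (the conjugate):
`c i` is the number of boxes in column `i`. -/
def IsPartition (c : ℕ+ → ℕ) : Prop :=
  (∀ i : ℕ+, c (i + 1) ≤ c i) ∧ ∃ N : ℕ+, ∀ i : ℕ+, N ≤ i → c i = 0

open Classical in
/-- The Schur operator `u_i`: add a box to column `i` if the result is a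
partition, else `none` (representing `0`). -/
noncomputable def addBox (i : ℕ+) (c : ℕ+ → ℕ) : Option (ℕ+ → ℕ) :=
  if IsPartition (Function.update c i (c i + 1)) then
    some (Function.update c i (c i + 1))
  else none

/-- `u_x = u_{x_1} ∘ ⋯ ∘ u_{x_l}` for a word `x = x_1 ⋯ x_l`. -/
noncomputable def schurWord (x : List ℕ+) (c : ℕ+ → ℕ) : Option (ℕ+ → ℕ) :=
  x.foldr (fun i o => o.bind (addBox i)) (some c)

/-- `α_i(x)`: the maximum over suffixes `s` of `x` of `w_{i+1}(s) - w_i(s)`. -/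
def alpha (i : ℕ+) (x : List ℕ+) : ℕ :=
  (x.tails.map (fun s => s.count (i + 1) - s.count i)).foldr max 0

/-- A commutation move: swap adjacent letters `a`, `b` with `|a - b| ≥ 2`. -/
inductive CommStep : List ℕ+ → List ℕ+ → Prop
  | comm (p s : List ℕ+) (a b : ℕ+) (h : 2 ≤ |((a : ℕ) : ℤ) - ((b : ℕ) : ℤ)|) :
      CommStep (p ++ [a, b] ++ s) (p ++ [b, a] ++ s)

/-- Equivalence of words under commutation moves. -/
def CommEquiv : List ℕ+ → List ℕ+ → Prop := Relation.EqvGen CommStep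

/-- `x[i,j]`: the subword of `x` consisting of the letters in `{i, …, j}`. -/
def restr (i j : ℕ+) (x : List ℕ+) : List ℕ+ :=
  x.filter (fun a => decide (i ≤ a ∧ a ≤ j))

/-! ### Auxiliary lemmas -/

lemma commStep_cons (a : ℕ+) {x y : List ℕ+} (h : CommStep x y) :
    CommStep (a :: x) (a :: y) := by
  cases h with
  | comm p s b c hbc => exact CommStep.comm (a :: p) s b c hbc

lemma commEquiv_cons (a : ℕ+) {x y : List ℕ+} (h : CommEquiv x y) :
    CommEquiv (a :: x) (a :: y) := by
  induction h with
  | rel u v h => exact Relation.EqvGen.rel _ _ (commStep_cons a h)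
  | refl u => exact Relation.EqvGen.refl _
  | symm u v _ ih => exact Relation.EqvGen.symm _ _ ih
  | trans u v w _ _ ih1 ih2 => exact Relation.EqvGen.trans _ _ _ ih1 ih2

lemma commEquiv_push (a : ℕ+) (p q : List ℕ+)
    (h : ∀ b ∈ p, 2 ≤ |((a : ℕ) : ℤ) - ((b : ℕ) : ℤ)|) :
    CommEquiv (p ++ a :: q) (a :: (p ++ q)) := by
  induction p with
  | nil => exact Relation.EqvGen.refl _
  | cons c p ih =>
    have h1 : CommEquiv (c :: (p ++ a :: q)) (c :: (a :: (p ++ q))) :=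
      commEquiv_cons c (ih (fun b hb => h b (List.mem_cons_of_mem _ hb)))
    have h2 : CommStep ([] ++ [c, a] ++ (p ++ q)) ([] ++ [a, c] ++ (p ++ q)) := by
      apply CommStep.comm
      rw [abs_sub_comm]
      exact h c (List.mem_cons_self)
    simp only [List.nil_append, List.cons_append] at h2 ⊢
    exact Relation.EqvGen.trans _ _ _ h1 (Relation.EqvGen.rel _ _ h2)


lemma abs_aux {a : ℕ+} (h : 3 ≤ (a : ℕ)) :
    2 ≤ |((a : ℕ) : ℤ) - (((1 : ℕ+) : ℕ) : ℤ)| := by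
  have h1 : ((1 : ℕ+) : ℕ) = 1 := rfl
  rw [h1]
  have : (3 : ℤ) ≤ ((a : ℕ) : ℤ) := by exact_mod_cast h
  rw [abs_of_nonneg (by omega)]; omega

lemma eq_one_of_lt_two {b : ℕ+} (h : (b : ℕ) < 2) : b = 1 := by
  have h1 : 1 ≤ (b : ℕ) := b.one_le
  apply PNat.coe_injective; simp only [PNat.one_coe]; omega

/-! ### The commutation-equivalence part -/

lemma restr_nil_of (i j : ℕ+) : restr i j [] = [] := rfl

lemma main_equiv (n : ℕ+) : ∀ (x y : List ℕ+),
    (∀ a ∈ x, a ≤ n) → (∀ a ∈ y, a ≤ n) →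
    restr 1 2 x = restr 1 2 y → restr 2 n x = restr 2 n y →
    CommEquiv x y := by
  intro x
  induction x with
  | nil =>
    intro y _ hy h12 h2n
    cases y with
    | nil => exact Relation.EqvGen.refl _
    | cons b y' =>
      exfalso
      have hb : b ≤ n := hy b (List.mem_cons_self)
      by_cases hb2 : b ≤ 2
      · have : restr 1 2 (b :: y') = b :: restr 1 2 y' := by
          simp [restr, List.filter_cons, hb2, b.one_le]
        rw [restr_nil_of, this] at h12; exact absurd h12 (by simp)
      · have h2b : (2 : ℕ+) ≤ b := le_of_not_ge hb2
        have : restr 2 n (b :: y') = b :: restr 2 n y' := by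
          simp [restr, List.filter_cons, h2b, hb]
        rw [restr_nil_of, this] at h2n; exact absurd h2n (by simp)
  | cons a x' ih =>
    intro y hx hy h12 h2n
    have ha : a ≤ n := hx a (List.mem_cons_self)
    have hx' : ∀ b ∈ x', b ≤ n := fun b hb => hx b (List.mem_cons_of_mem _ hb)
    have hcases : (a : ℕ) = 1 ∨ (a : ℕ) = 2 ∨ 3 ≤ (a : ℕ) := by
      have h0 : 1 ≤ (a : ℕ) := a.one_le; omega
    rcases hcases with h1 | h2 | h3
    · -- a = 1
      have ha1 : a = 1 := by
        apply PNat.coe_injective; exact h1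
      subst ha1
      have hr12 : restr 1 2 (1 :: x') = 1 :: restr 1 2 x' := by
        simp [restr, List.filter_cons]
      have hr2n : restr 2 n (1 :: x') = restr 2 n x' := by
        have : ¬ ((2:ℕ+) ≤ 1) := by decide
        simp [restr, List.filter_cons, this]
      rw [hr12] at h12
      rw [hr2n] at h2n
      obtain ⟨p, q, rfl, hp, -, hq⟩ := List.filter_eq_cons_iff.mp h12.symm
      have hpq : ∀ b ∈ p, ((3:ℕ) ≤ (b:ℕ)) := by
        intro b hb
        have := hp b hb
        simp only [decide_eq_true_eq, not_and] at this
        have h1b := b.one_le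
        have : ¬ (b ≤ (2:ℕ+)) := this h1b
        have : (2:ℕ) < (b:ℕ) := by
          by_contra hh
          exact this (by exact_mod_cast le_of_not_gt hh)
        omega
      have hstep : CommEquiv (p ++ 1 :: q) (1 :: (p ++ q)) := by
        apply commEquiv_push
        intro b hb
        rw [abs_sub_comm]
        exact abs_aux (hpq b hb)
      have hyq : ∀ b ∈ p ++ q, b ≤ n := by
        intro b hb
        apply hy
        rcases List.mem_append.mp hb with h | h
        · exact List.mem_append.mpr (Or.inl h)
        · exact List.mem_append.mpr (Or.inr (List.mem_cons_of_mem _ h))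
      have hrq12 : restr 1 2 x' = restr 1 2 (p ++ q) := by
        unfold restr at hq ⊢
        rw [List.filter_append]
        rw [List.filter_eq_nil_iff.mpr hp, List.nil_append]
        exact hq.symm
      have hrq2n : restr 2 n x' = restr 2 n (p ++ q) := by
        rw [h2n]
        unfold restr
        rw [List.filter_append, List.filter_append, List.filter_cons]
        have : ¬ ((2:ℕ+) ≤ 1 ∧ (1:ℕ+) ≤ n) := by
          intro ⟨h, _⟩; exact absurd h (by decide)
        simp [this]
      have := ih (p ++ q) hx' hyq hrq12 hrq2n
      exact Relation.EqvGen.trans _ _ _ (commEquiv_cons 1 this)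
        (Relation.EqvGen.symm _ _ hstep)
    · -- a = 2
      have ha2 : a = 2 := by apply PNat.coe_injective; exact h2
      subst ha2
      have h2n' : (2:ℕ+) ≤ n := ha
      have hr2n : restr 2 n (2 :: x') = 2 :: restr 2 n x' := by
        simp [restr, List.filter_cons, h2n', le_refl]
      rw [hr2n] at h2n
      obtain ⟨p, q, rfl, hp, -, hq⟩ := List.filter_eq_cons_iff.mp h2n.symm
      -- p consists of 1's
      have hp1 : ∀ b ∈ p, b = 1 := by
        intro b hb
        have hbn : b ≤ n := hy b (List.mem_append.mpr (Or.inl hb))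
        have := hp b hb
        simp only [decide_eq_true_eq, not_and] at this
        by_contra hb1
        have : ¬ ((2:ℕ+) ≤ b) := fun h => this h hbn
        have h1b := b.one_le
        have hlt : (b:ℕ) < 2 := by
          by_contra hh
          exact this (by exact_mod_cast le_of_not_gt hh)
        exact hb1 (eq_one_of_lt_two hlt)
      -- but restr 1 2 forces p = []
      have hpnil : p = [] := by
        cases p with
        | nil => rfl
        | cons b p' =>
          exfalso
          have hb1 : b = 1 := hp1 b (List.mem_cons_self)
          subst hb1
          have : restr 1 2 (2 :: x') = 2 :: restr 1 2 x' := by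
            simp [restr, List.filter_cons]
          rw [this] at h12
          have : restr 1 2 (1 :: (p' ++ 2 :: q)) = 1 :: restr 1 2 (p' ++ 2 :: q) := by
            simp [restr, List.filter_cons]
          rw [List.cons_append, this] at h12
          have := List.head_eq_of_cons_eq h12
          exact absurd this (by decide)
      subst hpnil
      simp only [List.nil_append] at *
      apply commEquiv_cons
      apply ih q hx' (fun b hb => hy b (List.mem_cons_of_mem _ hb))
      · have : restr 1 2 (2 :: x') = 2 :: restr 1 2 x' := by
          simp [restr, List.filter_cons]
        rw [this] at h12
        have : restr 1 2 (2 :: q) = 2 :: restr 1 2 q := by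
          simp [restr, List.filter_cons]
        rw [this] at h12
        exact List.tail_eq_of_cons_eq h12
      · exact hq.symm
    · -- a ≥ 3
      have h2a : (2:ℕ+) ≤ a := by
        have : (2:ℕ) ≤ (a:ℕ) := by omega
        exact_mod_cast this
      have hr2n : restr 2 n (a :: x') = a :: restr 2 n x' := by
        simp [restr, List.filter_cons, h2a, ha]
      rw [hr2n] at h2n
      obtain ⟨p, q, rfl, hp, -, hq⟩ := List.filter_eq_cons_iff.mp h2n.symm
      have hp1 : ∀ b ∈ p, b = 1 := by
        intro b hb
        have hbn : b ≤ n := hy b (List.mem_append.mpr (Or.inl hb))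
        have := hp b hb
        simp only [decide_eq_true_eq, not_and] at this
        have : ¬ ((2:ℕ+) ≤ b) := fun h => this h hbn
        have hlt : (b:ℕ) < 2 := by
          by_contra hh
          exact this (by exact_mod_cast le_of_not_gt hh)
        exact eq_one_of_lt_two hlt
      have hstep : CommEquiv (p ++ a :: q) (a :: (p ++ q)) := by
        apply commEquiv_push
        intro b hb
        rw [hp1 b hb]
        exact abs_aux h3
      have hyq : ∀ b ∈ p ++ q, b ≤ n := by
        intro b hb
        apply hy
        rcases List.mem_append.mp hb with h | h
        · exact List.mem_append.mpr (Or.inl h)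
        · exact List.mem_append.mpr (Or.inr (List.mem_cons_of_mem _ h))
      have hna : ¬ (a ≤ (2:ℕ+)) := by
        intro h
        have : (a:ℕ) ≤ 2 := by exact_mod_cast h
        omega
      have hr12' : restr 1 2 x' = restr 1 2 (p ++ q) := by
        have hpp : List.filter (fun a => decide ((1:ℕ+) ≤ a ∧ a ≤ 2)) p = p := by
          apply List.filter_eq_self.mpr
          intro b hb
          rw [hp1 b hb]
          decide
        have hl : restr 1 2 (a :: x') = restr 1 2 x' := by
          simp [restr, List.filter_cons, hna]
        have hr : restr 1 2 (p ++ a :: q) = p ++ restr 1 2 q := by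
          unfold restr
          rw [List.filter_append, List.filter_cons, hpp,
            if_neg (by simp only [decide_eq_true_eq, not_and]; exact fun _ => hna)]
        rw [hl, hr] at h12
        rw [h12]
        unfold restr
        rw [List.filter_append, hpp]
      have hr2n' : restr 2 n x' = restr 2 n (p ++ q) := by
        unfold restr at hq ⊢
        rw [List.filter_append]
        have hpp : List.filter (fun a => decide ((2:ℕ+) ≤ a ∧ a ≤ n)) p = [] := by
          apply List.filter_eq_nil_iff.mpr
          exact hp
        rw [hpp, List.nil_append]
        exact hq.symm
      have := ih (p ++ q) hx' hyq hr12' hr2n'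
      exact Relation.EqvGen.trans _ _ _ (commEquiv_cons a this)
        (Relation.EqvGen.symm _ _ hstep)

/-! ### The Schur operator part -/

lemma pnat_coe_ne {i j : ℕ+} (h : (i:ℕ) ≠ (j:ℕ)) : i ≠ j :=
  fun e => h (congrArg _ e)

lemma pnat_add_one_coe (i : ℕ+) : ((i + 1 : ℕ+) : ℕ) = (i : ℕ) + 1 := rfl

lemma dist_cases {a b : ℕ+} (hab : 2 ≤ |((a:ℕ):ℤ) - ((b:ℕ):ℤ)|) :
    (a:ℕ) + 2 ≤ (b:ℕ) ∨ (b:ℕ) + 2 ≤ (a:ℕ) := by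
  rcases abs_cases (((a:ℕ):ℤ) - ((b:ℕ):ℤ)) with ⟨h1, _⟩ | ⟨h1, _⟩ <;> omega

lemma part_update (a b : ℕ+) (c : ℕ+ → ℕ)
    (hab : 2 ≤ |((a:ℕ):ℤ) - ((b:ℕ):ℤ)|)
    (hc : IsPartition c)
    (hcab : IsPartition
      (Function.update (Function.update c b (c b + 1)) a (c a + 1))) :
    IsPartition (Function.update c b (c b + 1)) := by
  have hd := dist_cases hab
  have hne : a ≠ b := pnat_coe_ne (by omega)
  constructor
  · intro i
    by_cases h1 : i + 1 = b
    · have h1' : (i:ℕ) + 1 = (b:ℕ) := by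
        rw [← pnat_add_one_coe]; exact congrArg _ h1
      have hib : i ≠ b := pnat_coe_ne (by omega)
      have hia : i ≠ a := pnat_coe_ne (by omega)
      rw [h1, Function.update_self, Function.update_of_ne hib]
      have := hcab.1 i
      rw [h1, Function.update_of_ne hne.symm, Function.update_self,
        Function.update_of_ne hia, Function.update_of_ne hib] at this
      exact this
    · by_cases h2 : i = b
      · subst h2
        rw [Function.update_of_ne h1, Function.update_self]
        exact le_trans (hc.1 i) (Nat.le_succ _)
      · rw [Function.update_of_ne h1, Function.update_of_ne h2]
        exact hc.1 i
  · obtain ⟨N, hN⟩ := hc.2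
    refine ⟨N + b, fun i hi => ?_⟩
    have hi' : (N:ℕ) + (b:ℕ) ≤ (i:ℕ) := by exact_mod_cast hi
    have hN1 : 1 ≤ (N:ℕ) := N.one_le
    have hib : i ≠ b := pnat_coe_ne (by omega)
    rw [Function.update_of_ne hib]
    exact hN i (by exact_mod_cast (by omega : (N:ℕ) ≤ (i:ℕ)))

lemma addBox_comm (a b : ℕ+) (hab : 2 ≤ |((a:ℕ):ℤ) - ((b:ℕ):ℤ)|)
    (c : ℕ+ → ℕ) (hc : IsPartition c) :
    (addBox b c).bind (addBox a) = (addBox a c).bind (addBox b) := by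
  have hab' : 2 ≤ |((b:ℕ):ℤ) - ((a:ℕ):ℤ)| := by rw [abs_sub_comm]; exact hab
  have hd := dist_cases hab
  have hne : a ≠ b := pnat_coe_ne (by omega)
  have hkey : Function.update (Function.update c b (c b + 1)) a (c a + 1)
      = Function.update (Function.update c a (c a + 1)) b (c b + 1) :=
    (Function.update_comm hne (c a + 1) (c b + 1) c).symm
  have hvb : Function.update c b (c b + 1) a = c a := Function.update_of_ne hne _ _
  have hva : Function.update c a (c a + 1) b = c b := Function.update_of_ne hne.symm _ _
  by_cases hP : IsPartition (Function.update (Function.update c b (c b + 1)) a (c a + 1))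
  · have hP' : IsPartition (Function.update (Function.update c a (c a + 1)) b (c b + 1)) := by
      rw [← hkey]; exact hP
    have hPb := part_update a b c hab hc hP
    have hPa := part_update b a c hab' hc hP'
    have e1 : addBox b c = some (Function.update c b (c b + 1)) := by
      simp only [addBox, if_pos hPb]
    have e2 : addBox a c = some (Function.update c a (c a + 1)) := by
      simp only [addBox, if_pos hPa]
    rw [e1, e2, Option.bind_some, Option.bind_some]
    simp only [addBox]
    rw [hvb, hva, if_pos hP, if_pos hP', hkey]
  · have hP' : ¬ IsPartition (Function.update (Function.update c a (c a + 1)) b (c b + 1)) := by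
      rw [← hkey]; exact hP
    have L : (addBox b c).bind (addBox a) = none := by
      by_cases hPb : IsPartition (Function.update c b (c b + 1))
      · have e1 : addBox b c = some (Function.update c b (c b + 1)) := by
          simp only [addBox, if_pos hPb]
        rw [e1, Option.bind_some]
        simp only [addBox]
        rw [hvb, if_neg hP]
      · have e1 : addBox b c = none := by simp only [addBox, if_neg hPb]
        rw [e1, Option.bind_none]
    have R : (addBox a c).bind (addBox b) = none := by
      by_cases hPa : IsPartition (Function.update c a (c a + 1))
      · have e2 : addBox a c = some (Function.update c a (c a + 1)) := by
          simp only [addBox, if_pos hPa]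
        rw [e2, Option.bind_some]
        simp only [addBox]
        rw [hva, if_neg hP']
      · have e2 : addBox a c = none := by simp only [addBox, if_neg hPa]
        rw [e2, Option.bind_none]
    rw [L, R]

lemma addBox_part {i : ℕ+} {c d : ℕ+ → ℕ} (h : addBox i c = some d) :
    IsPartition d := by
  by_cases hP : IsPartition (Function.update c i (c i + 1))
  · simp only [addBox, if_pos hP, Option.some_inj] at h
    rw [← h]; exact hP
  · simp only [addBox, if_neg hP] at h
    exact absurd h (by simp)

lemma schurWord_part {x : List ℕ+} {c d : ℕ+ → ℕ} (hc : IsPartition c)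
    (h : schurWord x c = some d) : IsPartition d := by
  cases x with
  | nil =>
    simp only [schurWord, List.foldr_nil, Option.some_inj] at h
    rw [← h]; exact hc
  | cons i x' =>
    have : schurWord (i :: x') c = (schurWord x' c).bind (addBox i) := rfl
    rw [this] at h
    cases he : schurWord x' c with
    | none => rw [he, Option.bind_none] at h; exact absurd h (by simp)
    | some e => rw [he, Option.bind_some] at h; exact addBox_part h

lemma commStep_schur {x y : List ℕ+} (h : CommStep x y)
    (c : ℕ+ → ℕ) (hc : IsPartition c) :
    schurWord x c = schurWord y c := by
  cases h with
  | comm p s a b hab =>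
    unfold schurWord
    rw [List.foldr_append, List.foldr_append, List.foldr_append, List.foldr_append]
    congr 1
    show List.foldr _ (schurWord s c) [a, b] = List.foldr _ (schurWord s c) [b, a]
    cases ho : schurWord s c with
    | none => simp
    | some d =>
      have hd := schurWord_part hc ho
      show ((some d).bind (addBox b)).bind (addBox a)
          = ((some d).bind (addBox a)).bind (addBox b)
      rw [Option.bind_some, Option.bind_some]
      exact addBox_comm a b hab d hd

lemma commEquiv_schur {x y : List ℕ+} (h : CommEquiv x y) :
    ∀ c : ℕ+ → ℕ, IsPartition c → schurWord x c = schurWord y c := by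
  induction h with
  | rel u v h => exact fun c hc => commStep_schur h c hc
  | refl u => exact fun c _ => rfl
  | symm u v _ ih => exact fun c hc => (ih c hc).symm
  | trans u v w _ _ ih1 ih2 => exact fun c hc => (ih1 c hc).trans (ih2 c hc)

theorem stmt14 (n : ℕ+) (x y : List ℕ+)
    (hx : ∀ a ∈ x, a ≤ n) (hy : ∀ a ∈ y, a ≤ n)
    (h12 : restr 1 2 x = restr 1 2 y) (h2n : restr 2 n x = restr 2 n y) :
    CommEquiv x y ∧
      (∀ c : ℕ+ → ℕ, IsPartition c → schurWord x c = schurWord y c) := by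
  have h := main_equiv n x y hx hy h12 h2n
  exact ⟨h, commEquiv_schur h⟩
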